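/- Let Y be a separable Banach space and μ, ν Borel probability measures on Y with finite first moment. Then sup { ∫ φ dμ − ∫ φ dν : φ ∈ C¹_b(Y), Lip(φ) ≤ 1 } = W₁(μ, ν), i.e., the C¹-smooth dual distance coincides with the 1-Wasserstein distance. -/

import Mathlib

open MeasureTheory Convolution Metric

lemma smooth_approx {E : Type*} [NormedAddCommGroup E] [NormedSpace ℝ E]
    [FiniteDimensional ℝ E] [MeasurableSpace E] [BorelSpace E]
    (μ : Measure E) [μ.IsAddHaarMeasure]
    (G : E → ℝ) (hG : LipschitzWith 1 G) (M : ℝ) (hGb : ∀ t, |G t| ≤ M)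
    {δ : ℝ} (hδ : 0 < δ) :
    ∃ H : E → ℝ, ContDiff ℝ 1 H ∧ LipschitzWith 1 H ∧ (∀ t, |H t| ≤ M) ∧
      ∀ t, |H t - G t| ≤ δ := by
  set φ : ContDiffBump (0 : E) := ⟨δ/2, δ, by linarith, by linarith⟩ with hφ
  set H : E → ℝ := φ.normed μ ⋆[ContinuousLinearMap.lsmul ℝ ℝ, μ] G with hH
  have hGc : Continuous G := hG.continuous
  have key : ∀ x : E, Integrable (fun t => φ.normed μ t * G (x - t)) μ := by
    intro x
    apply Continuous.integrable_of_hasCompactSupport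
    · exact φ.continuous_normed.mul (hGc.comp (continuous_const.sub continuous_id))
    · exact φ.hasCompactSupport_normed.mul_right
  have hHx : ∀ x, H x = ∫ t, φ.normed μ t * G (x - t) ∂μ := fun x => by
    simp only [hH, convolution_def, ContinuousLinearMap.lsmul_apply, smul_eq_mul]
  have hint : Integrable (φ.normed μ) μ := φ.integrable_normed
  refine ⟨H, ?_, ?_, ?_, ?_⟩
  · exact φ.hasCompactSupport_normed.contDiff_convolution_left _
      φ.contDiff_normed hGc.locallyIntegrable
  · apply LipschitzWith.of_dist_le_mul
    intro x y
    have h1 : H x - H y = ∫ t, (φ.normed μ t * G (x - t) - φ.normed μ t * G (y - t)) ∂μ := by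
      rw [hHx, hHx, integral_sub (key x) (key y)]
    rw [Real.dist_eq, h1, NNReal.coe_one, one_mul]
    calc |∫ t, (φ.normed μ t * G (x - t) - φ.normed μ t * G (y - t)) ∂μ|
        ≤ ∫ t, |φ.normed μ t * G (x - t) - φ.normed μ t * G (y - t)| ∂μ := by
          simpa only [Real.norm_eq_abs] using
            norm_integral_le_integral_norm (μ := μ)
              (f := fun t => φ.normed μ t * G (x - t) - φ.normed μ t * G (y - t))
      _ ≤ ∫ t, φ.normed μ t * dist x y ∂μ := by
          apply integral_mono ((key x).sub (key y)).abs (hint.mul_const _)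
          intro t
          dsimp only [Pi.sub_apply]
          have : |φ.normed μ t * G (x - t) - φ.normed μ t * G (y - t)|
              = φ.normed μ t * |G (x - t) - G (y - t)| := by
            rw [← mul_sub, abs_mul, abs_of_nonneg (φ.nonneg_normed t)]
          rw [this]
          gcongr
          · exact φ.nonneg_normed t
          · have := hG.dist_le_mul (x - t) (y - t)
            simpa [Real.dist_eq, dist_eq_norm] using this
      _ = dist x y := by rw [integral_mul_const, φ.integral_normed, one_mul]
  · intro x
    rw [hHx]
    calc |∫ t, φ.normed μ t * G (x - t) ∂μ| ≤ ∫ t, |φ.normed μ t * G (x - t)| ∂μ := by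
          simpa only [Real.norm_eq_abs] using
            norm_integral_le_integral_norm (μ := μ) (f := fun t => φ.normed μ t * G (x - t))
      _ ≤ ∫ t, φ.normed μ t * M ∂μ := by
          apply integral_mono (key x).abs (hint.mul_const _)
          intro t
          dsimp only []
          rw [abs_mul, abs_of_nonneg (φ.nonneg_normed t)]
          gcongr
          · exact φ.nonneg_normed t
          · exact hGb _
      _ = M := by rw [integral_mul_const, φ.integral_normed, one_mul]
  · intro x
    have := φ.dist_normed_convolution_le (μ := μ) (g := G) (x₀ := x)
      hGc.aestronglyMeasurable (ε := δ) ?_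
    · simpa [Real.dist_eq, hH] using this
    · intro z hz
      have h1 := hG.dist_le_mul z x
      have h2 : dist z x < δ := by simpa [hφ] using hz
      calc dist (G z) (G x) ≤ 1 * dist z x := h1
        _ ≤ δ := by rw [one_mul]; exact h2.le

lemma approx_lemma {Y : Type*} [NormedAddCommGroup Y] [NormedSpace ℝ Y]
    [CompleteSpace Y] [TopologicalSpace.SeparableSpace Y]
    [MeasurableSpace Y] [BorelSpace Y]
    (μ ν : Measure Y) [IsProbabilityMeasure μ] [IsProbabilityMeasure ν]
    (φ : Y → ℝ) (M : ℝ) (hM : 0 ≤ M) (hb : ∀ y, |φ y| ≤ M)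
    (hLip : LipschitzWith 1 φ) {ε : ℝ} (hε : 0 < ε) :
    ∃ ψ : Y → ℝ, (∀ y, |ψ y| ≤ M) ∧ ContDiff ℝ 1 ψ ∧ LipschitzWith 1 ψ ∧
      ∫ y, φ y ∂μ - ∫ y, φ y ∂ν ≤ (∫ y, ψ y ∂μ - ∫ y, ψ y ∂ν) + ε := by
  obtain ⟨u, hu⟩ := TopologicalSpace.exists_dense_seq Y
  set δ : ℝ := ε / 12 with hδdef
  have hδ : 0 < δ := by positivity
  set ε' : ℝ := ε / (8 * (M + 1)) with hε'def
  have hε' : 0 < ε' := by positivity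
  set K : ℕ → Set Y := fun n => ⋃ i ∈ Finset.range n, ball (u i) δ with hK
  have hKopen : ∀ n, IsOpen (K n) := fun n => isOpen_biUnion fun i _ => isOpen_ball
  have hKmono : Monotone K := fun a b hab =>
    Set.biUnion_subset_biUnion_left (by exact_mod_cast Finset.range_subset_range.2 hab)
  have hKc : (⋂ n, (K n)ᶜ) = ∅ := by
    ext y
    simp only [Set.mem_iInter, Set.mem_compl_iff, Set.mem_empty_iff_false, iff_false,
      not_forall, not_not]
    obtain ⟨i, hi⟩ := hu.exists_dist_lt y hδ
    exact ⟨i + 1, Set.mem_biUnion (Finset.self_mem_range_succ i) (mem_ball.2 hi)⟩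
  have tend : ∀ (κ : Measure Y), IsProbabilityMeasure κ →
      Filter.Tendsto (fun n => κ (K n)ᶜ) Filter.atTop (nhds 0) := by
    intro κ hκ
    have h := tendsto_measure_iInter_atTop (μ := κ) (s := fun n => (K n)ᶜ)
      (fun n => (hKopen n).measurableSet.compl.nullMeasurableSet)
      (fun a b hab => Set.compl_subset_compl.2 (hKmono hab))
      ⟨0, measure_ne_top _ _⟩
    rw [hKc, measure_empty] at h
    exact h
  have h0 : (0 : ENNReal) < ENNReal.ofReal ε' := ENNReal.ofReal_pos.2 hε'
  obtain ⟨N, hNμ, hNν⟩ :=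
    (((tend μ inferInstance).eventually_lt_const h0).and
      ((tend ν inferInstance).eventually_lt_const h0)).exists
  have hKμ : μ (K (N + 1))ᶜ < ENNReal.ofReal ε' :=
    lt_of_le_of_lt (measure_mono (Set.compl_subset_compl.2 (hKmono (Nat.le_succ N)))) hNμ
  have hKν : ν (K (N + 1))ᶜ < ENNReal.ofReal ε' :=
    lt_of_le_of_lt (measure_mono (Set.compl_subset_compl.2 (hKmono (Nat.le_succ N)))) hNν
  set n : ℕ := N + 1 with hn
  -- norming functionals on the net
  have hdual : ∀ p : Fin n × Fin n, ∃ g : Y →L[ℝ] ℝ, ‖g‖ ≤ 1 ∧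
      g (u p.1 - u p.2) = ‖u p.1 - u p.2‖ := fun p => exists_dual_vector'' ℝ _
  choose f hf1 hf2 using hdual
  set E : Type _ := (Fin n × Fin n) → ℝ with hE
  set F : Y →L[ℝ] E := ContinuousLinearMap.pi f with hF'
  have hF : LipschitzWith 1 F := by
    apply LipschitzWith.of_dist_le_mul
    intro a b
    rw [dist_eq_norm, dist_eq_norm, NNReal.coe_one, one_mul, ← map_sub]
    rw [pi_norm_le_iff_of_nonneg (norm_nonneg _)]
    intro p
    calc ‖F (a - b) p‖ = ‖f p (a - b)‖ := rfl
      _ ≤ ‖f p‖ * ‖a - b‖ := (f p).le_opNorm _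
      _ ≤ 1 * ‖a - b‖ := by
          have := hf1 p
          gcongr
      _ = ‖a - b‖ := one_mul _
  have hnet : ∀ y ∈ K n, ∃ i : Fin n, dist y (u i) < δ := by
    intro y hy
    rw [hK] at hy
    simp only [Set.mem_iUnion, Finset.mem_range, exists_prop, mem_ball] at hy
    obtain ⟨i, hi, hyi⟩ := hy
    exact ⟨⟨i, hi⟩, hyi⟩
  have hkey : ∀ y ∈ K n, ∀ j : Fin n, ‖y - u j‖ ≤ ‖F y - F (u j)‖ + 2 * δ := by
    intro y hy j
    obtain ⟨i, hi⟩ := hnet y hy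
    have e1 : ‖y - u j‖ ≤ ‖y - u i‖ + ‖u i - u j‖ := by
      simpa [dist_eq_norm] using dist_triangle y (u i) (u j)
    have e2 : ‖u (i : ℕ) - u j‖ = f (i, j) (u (i : ℕ) - u j) := (hf2 (i, j)).symm
    have e3 : f (i, j) (u (i : ℕ) - u j) = f (i, j) (y - u j) + f (i, j) (u (i : ℕ) - y) := by
      rw [← map_add]
      congr 1
      abel
    have e4 : f (i, j) (u (i : ℕ) - y) ≤ ‖u (i : ℕ) - y‖ := by
      calc f (i, j) (u (i : ℕ) - y) ≤ |f (i, j) (u (i : ℕ) - y)| := le_abs_self _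
        _ ≤ ‖f (i, j)‖ * ‖u (i : ℕ) - y‖ := (f (i, j)).le_opNorm _
        _ ≤ 1 * ‖u (i : ℕ) - y‖ := by have := hf1 (i, j); gcongr
        _ = ‖u (i : ℕ) - y‖ := one_mul _
    have e5 : f (i, j) (y - u j) ≤ ‖F y - F (u j)‖ := by
      have h1 : f (i, j) (y - u j) = (F y - F (u j)) (i, j) := by
        rw [map_sub]; rfl
      rw [h1]
      calc (F y - F (u j)) (i, j) ≤ |(F y - F (u j)) (i, j)| := le_abs_self _
        _ ≤ ‖F y - F (u j)‖ := by
            simpa [Real.norm_eq_abs] using norm_le_pi_norm (F y - F (u j)) (i, j)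
    have e6 : ‖y - u i‖ < δ := by simpa [dist_eq_norm] using hi
    have e7 : ‖u (i : ℕ) - y‖ = ‖y - u i‖ := norm_sub_rev _ _
    linarith [e1, e2, e3, e4, e5, e6, e7]
  -- the cylindrical inf-convolution
  haveI : Nonempty (Fin n) := ⟨⟨0, Nat.succ_pos N⟩⟩
  set G0 : E → ℝ := fun t => ⨅ j : Fin n, (φ (u j) + ‖t - F (u j)‖) with hG0
  have bddb : ∀ t : E, BddBelow (Set.range fun j : Fin n => φ (u j) + ‖t - F (u j)‖) :=
    fun t => (Set.finite_range _).bddBelow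
  have hG0le : ∀ (t : E) (j : Fin n), G0 t ≤ φ (u j) + ‖t - F (u j)‖ :=
    fun t j => ciInf_le (bddb t) j
  have hG0ge : ∀ (t : E) (c : ℝ), (∀ j : Fin n, c ≤ φ (u j) + ‖t - F (u j)‖) → c ≤ G0 t :=
    fun t c h => le_ciInf h
  have hG0step : ∀ s t : E, G0 s ≤ G0 t + ‖s - t‖ := by
    intro s t
    rw [← sub_le_iff_le_add]
    apply hG0ge
    intro j
    have h1 := hG0le s j
    have h2 : ‖s - F (u j)‖ ≤ ‖s - t‖ + ‖t - F (u j)‖ := by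
      exact norm_sub_le_norm_sub_add_norm_sub _ _ _
    linarith
  have hG0lip : LipschitzWith 1 G0 := by
    apply LipschitzWith.of_dist_le_mul
    intro s t
    rw [Real.dist_eq, NNReal.coe_one, one_mul, abs_sub_le_iff]
    constructor
    · have := hG0step s t
      have h2 : ‖s - t‖ ≤ dist s t := (dist_eq_norm s t).ge
      linarith
    · have := hG0step t s
      have h2 : ‖t - s‖ ≤ dist s t := by rw [norm_sub_rev]; exact (dist_eq_norm s t).ge
      linarith
  have hG0ub : ∀ y ∈ K n, G0 (F y) ≤ φ y + 2 * δ := by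
    intro y hy
    obtain ⟨i, hi⟩ := hnet y hy
    have h1 : φ (u i) ≤ φ y + δ := by
      have := hLip.dist_le_mul (u i) y
      rw [NNReal.coe_one, one_mul, Real.dist_eq, dist_comm] at this
      have h2 := (abs_le.1 this).2
      linarith [le_of_lt hi]
    have h2 : ‖F y - F (u i)‖ ≤ dist y (u i) := by
      have := hF.dist_le_mul y (u i)
      rw [NNReal.coe_one, one_mul] at this
      exact (dist_eq_norm (F y) (F (u i))).ge.trans this
    calc G0 (F y) ≤ φ (u i) + ‖F y - F (u i)‖ := hG0le _ i
      _ ≤ (φ y + δ) + δ := add_le_add h1 (h2.trans hi.le)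
      _ = φ y + 2 * δ := by ring
  have hG0lb : ∀ y ∈ K n, φ y - 2 * δ ≤ G0 (F y) := by
    intro y hy
    apply hG0ge
    intro j
    have h1 := hkey y hy j
    have h2 : φ y ≤ φ (u j) + ‖y - u j‖ := by
      have := hLip.dist_le_mul y (u j)
      rw [NNReal.coe_one, one_mul, Real.dist_eq, dist_eq_norm] at this
      linarith [(abs_le.1 this).2]
    linarith
  -- clamp to [-M, M]
  set G1 : E → ℝ := fun t => max (min (G0 t) M) (-M) with hG1
  have hG1b : ∀ t, |G1 t| ≤ M := by
    intro t
    rw [abs_le]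
    exact ⟨le_max_right _ _, max_le ((min_le_right _ _)) (neg_le_self hM)⟩
  have hclamp : ∀ a b : ℝ, |max (min a M) (-M) - max (min b M) (-M)| ≤ |a - b| := by
    intro a b
    refine (abs_max_sub_max_le_abs _ _ _).trans ?_
    refine (abs_min_sub_min_le_max a M b M).trans ?_
    simp [abs_nonneg]
  have hG1lip : LipschitzWith 1 G1 := by
    apply LipschitzWith.of_dist_le_mul
    intro s t
    rw [Real.dist_eq, NNReal.coe_one, one_mul]
    refine (hclamp _ _).trans ?_
    have := hG0lip.dist_le_mul s t
    rwa [Real.dist_eq, NNReal.coe_one, one_mul] at this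
  have hG1K : ∀ y ∈ K n, |G1 (F y) - φ y| ≤ 2 * δ := by
    intro y hy
    have hφy : φ y = max (min (φ y) M) (-M) := by
      rw [min_eq_left (abs_le.1 (hb y)).2, max_eq_left (abs_le.1 (hb y)).1]
    calc |G1 (F y) - φ y| = |max (min (G0 (F y)) M) (-M) - max (min (φ y) M) (-M)| := by
          rw [← hφy]
      _ ≤ |G0 (F y) - φ y| := hclamp _ _
      _ ≤ 2 * δ := abs_le.2 ⟨by linarith [hG0lb y hy], by linarith [hG0ub y hy]⟩
  -- smooth in finite dimensions
  obtain ⟨H, hHcd, hHlip, hHb, hHapprox⟩ :=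
    smooth_approx (volume : Measure E) G1 hG1lip M hG1b hδ
  set ψ : Y → ℝ := fun y => H (F y) with hψ
  have hψcd : ContDiff ℝ 1 ψ := hHcd.comp F.contDiff
  have hψlip : LipschitzWith 1 ψ := by have := hHlip.comp hF; rw [mul_one] at this; exact this
  have hψb : ∀ y, |ψ y| ≤ M := fun y => hHb _
  have hψK : ∀ y ∈ K n, |ψ y - φ y| ≤ 3 * δ := by
    intro y hy
    calc |ψ y - φ y| ≤ |H (F y) - G1 (F y)| + |G1 (F y) - φ y| := abs_sub_le _ _ _
      _ ≤ δ + 2 * δ := add_le_add (hHapprox _) (hG1K y hy)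
      _ = 3 * δ := by ring
  have hψglob : ∀ y, |ψ y - φ y| ≤ 2 * M := by
    intro y
    have h1 := abs_le.1 (hψb y)
    have h2 := abs_le.1 (hb y)
    rw [abs_le]
    constructor <;> linarith
  -- integral estimates
  have main : ∀ (κ : Measure Y), IsProbabilityMeasure κ → κ (K n)ᶜ < ENNReal.ofReal ε' →
      |∫ y, ψ y ∂κ - ∫ y, φ y ∂κ| ≤ 3 * δ + 2 * M * ε' := by
    intro κ hκ hκK
    have hmeas : MeasurableSet (K n)ᶜ := (hKopen n).measurableSet.compl
    have hψint : Integrable ψ κ :=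
      (integrable_const M).mono' (hψcd.continuous.aestronglyMeasurable)
        (Filter.Eventually.of_forall fun y => by simpa [Real.norm_eq_abs] using hψb y)
    have hφint : Integrable φ κ :=
      (integrable_const M).mono' (hLip.continuous.aestronglyMeasurable)
        (Filter.Eventually.of_forall fun y => by simpa [Real.norm_eq_abs] using hb y)
    have hBint : Integrable (fun y => 3 * δ + Set.indicator (K n)ᶜ (fun _ => 2 * M) y) κ :=
      (integrable_const _).add ((integrable_const (2 * M)).indicator hmeas)
    have hpt : ∀ y, |ψ y - φ y| ≤ 3 * δ + Set.indicator (K n)ᶜ (fun _ => 2 * M) y := by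
      intro y
      by_cases hy : y ∈ K n
      · rw [Set.indicator_of_notMem (by simpa using hy)]
        simpa using hψK y hy
      · rw [Set.indicator_of_mem (by simpa using hy)]
        have := hψglob y
        linarith [hδ.le]
    have htoReal : (κ (K n)ᶜ).toReal ≤ ε' := (ENNReal.toReal_lt_of_lt_ofReal hκK).le
    calc |∫ y, ψ y ∂κ - ∫ y, φ y ∂κ| = |∫ y, (ψ y - φ y) ∂κ| := by
          rw [integral_sub hψint hφint]
      _ ≤ ∫ y, |ψ y - φ y| ∂κ := by
          simpa only [Real.norm_eq_abs] using
            norm_integral_le_integral_norm (μ := κ) (f := fun y => ψ y - φ y)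
      _ ≤ ∫ y, (3 * δ + Set.indicator (K n)ᶜ (fun _ => 2 * M) y) ∂κ := by
          apply integral_mono (hψint.sub hφint).abs hBint
          intro y
          exact hpt y
      _ = 3 * δ + 2 * M * (κ (K n)ᶜ).toReal := by
          rw [integral_add (integrable_const _) ((integrable_const (2 * M)).indicator hmeas)]
          rw [integral_const, integral_indicator_const _ hmeas]
          simp [measure_univ, mul_comm, measureReal_def]
      _ ≤ 3 * δ + 2 * M * ε' := by
          have : 2 * M * (κ (K n)ᶜ).toReal ≤ 2 * M * ε' := by
            apply mul_le_mul_of_nonneg_left htoReal (by linarith)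
          linarith
  have h1 := main μ inferInstance hKμ
  have h2 := main ν inferInstance hKν
  refine ⟨ψ, hψb, hψcd, hψlip, ?_⟩
  have hM1 : (0:ℝ) < M + 1 := by linarith
  have hbound : 2 * M * ε' ≤ ε / 4 := by
    rw [hε'def, ← mul_div_assoc]
    rw [div_le_div_iff₀ (by positivity) (by norm_num : (0:ℝ) < 4)]
    nlinarith [hε.le, hM]
  have e1 : ∫ y, φ y ∂μ - ∫ y, ψ y ∂μ ≤ 3 * δ + 2 * M * ε' := by
    have := (abs_le.1 h1).1
    linarith
  have e2 : ∫ y, ψ y ∂ν - ∫ y, φ y ∂ν ≤ 3 * δ + 2 * M * ε' := by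
    have := (abs_le.1 h2).2
    linarith
  have hδε : 3 * δ = ε / 4 := by rw [hδdef]; ring
  linarith


/-- On a separable Banach space, for probability measures with finite first moment,
the `C¹`-smooth dual distance coincides with the 1-Wasserstein distance in its
Kantorovich dual form over bounded Lipschitz test functions. -/
theorem stmt6 {Y : Type*} [NormedAddCommGroup Y] [NormedSpace ℝ Y]
    [CompleteSpace Y] [TopologicalSpace.SeparableSpace Y]
    [MeasurableSpace Y] [BorelSpace Y]
    (μ ν : Measure Y) [IsProbabilityMeasure μ] [IsProbabilityMeasure ν]
    (hμ : Integrable (fun y => ‖y‖) μ) (hν : Integrable (fun y => ‖y‖) ν) :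
    sSup {r : ℝ | ∃ φ : Y → ℝ, (∃ M : ℝ, ∀ y, |φ y| ≤ M) ∧ ContDiff ℝ 1 φ ∧
        LipschitzWith 1 φ ∧ r = ∫ y, φ y ∂μ - ∫ y, φ y ∂ν} =
      sSup {r : ℝ | ∃ φ : Y → ℝ, (∃ M : ℝ, ∀ y, |φ y| ≤ M) ∧
        LipschitzWith 1 φ ∧ r = ∫ y, φ y ∂μ - ∫ y, φ y ∂ν} := by
  set S1 : Set ℝ := {r : ℝ | ∃ φ : Y → ℝ, (∃ M : ℝ, ∀ y, |φ y| ≤ M) ∧ ContDiff ℝ 1 φ ∧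
      LipschitzWith 1 φ ∧ r = ∫ y, φ y ∂μ - ∫ y, φ y ∂ν} with hS1
  set S2 : Set ℝ := {r : ℝ | ∃ φ : Y → ℝ, (∃ M : ℝ, ∀ y, |φ y| ≤ M) ∧
      LipschitzWith 1 φ ∧ r = ∫ y, φ y ∂μ - ∫ y, φ y ∂ν} with hS2
  have hzero_lip : LipschitzWith 1 (fun _ : Y => (0:ℝ)) := by
    intro x y
    simp
  have zero1 : (0:ℝ) ∈ S1 :=
    ⟨fun _ => 0, ⟨0, fun y => by simp⟩, contDiff_const, hzero_lip, by simp⟩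
  have zero2 : (0:ℝ) ∈ S2 :=
    ⟨fun _ => 0, ⟨0, fun y => by simp⟩, hzero_lip, by simp⟩
  have hsub : S1 ⊆ S2 := by
    rintro r ⟨φ, hbM, _, hLip, hr⟩
    exact ⟨φ, hbM, hLip, hr⟩
  have hbdd2 : BddAbove S2 := by
    refine ⟨(∫ y, ‖y‖ ∂μ) + ∫ y, ‖y‖ ∂ν, ?_⟩
    rintro r ⟨φ, ⟨M, hbM⟩, hLip, rfl⟩
    have key : ∀ y : Y, |φ y - φ 0| ≤ ‖y‖ := by
      intro y
      have := hLip.dist_le_mul y 0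
      rwa [Real.dist_eq, NNReal.coe_one, one_mul, dist_eq_norm, sub_zero] at this
    have hφint : ∀ (κ : Measure Y), IsProbabilityMeasure κ → Integrable φ κ := by
      intro κ hκ
      exact (integrable_const M).mono' hLip.continuous.aestronglyMeasurable
        (Filter.Eventually.of_forall fun y => by simpa [Real.norm_eq_abs] using hbM y)
    have up : ∫ y, φ y ∂μ ≤ φ 0 + ∫ y, ‖y‖ ∂μ := by
      calc ∫ y, φ y ∂μ ≤ ∫ y, (φ 0 + ‖y‖) ∂μ := by
            apply integral_mono (hφint μ inferInstance) ((integrable_const _).add hμ)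
            intro y
            have := (abs_le.1 (key y)).2
            simp only [Pi.add_apply]
            linarith
        _ = φ 0 + ∫ y, ‖y‖ ∂μ := by
            rw [integral_add (integrable_const _) hμ, integral_const]
            simp [measure_univ]
    have down : φ 0 - ∫ y, ‖y‖ ∂ν ≤ ∫ y, φ y ∂ν := by
      have h1 : ∫ y, (φ 0 - ‖y‖) ∂ν ≤ ∫ y, φ y ∂ν := by
        apply integral_mono ((integrable_const _).sub hν) (hφint ν inferInstance)
        intro y
        have := (abs_le.1 (key y)).1
        simp only [Pi.sub_apply]
        linarith
      have h2 : ∫ y, (φ 0 - ‖y‖) ∂ν = φ 0 - ∫ y, ‖y‖ ∂ν := by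
        rw [integral_sub (integrable_const _) hν, integral_const]
        simp [measure_univ]
      linarith
    linarith
  have hbdd1 : BddAbove S1 := hbdd2.mono hsub
  apply le_antisymm
  · exact csSup_le_csSup hbdd2 ⟨0, zero1⟩ hsub
  · apply csSup_le ⟨0, zero2⟩
    rintro r ⟨φ, ⟨M0, hb0⟩, hLip, rfl⟩
    refine le_of_forall_pos_le_add ?_
    intro ε hε
    obtain ⟨ψ, hψb, hψcd, hψlip, hle⟩ := approx_lemma μ ν φ (max M0 0) (le_max_right _ _)
      (fun y => (hb0 y).trans (le_max_left _ _)) hLip hε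
    have mem1 : (∫ y, ψ y ∂μ - ∫ y, ψ y ∂ν) ∈ S1 :=
      ⟨ψ, ⟨max M0 0, hψb⟩, hψcd, hψlip, rfl⟩
    calc ∫ y, φ y ∂μ - ∫ y, φ y ∂ν ≤ (∫ y, ψ y ∂μ - ∫ y, ψ y ∂ν) + ε := hle
      _ ≤ sSup S1 + ε := add_le_add (le_csSup hbdd1 mem1) le_rfl
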